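/- Let K > 0, n a natural number, ω, p, q : ℝ → ℝ continuous, and let a, b : ℝ → ℝ be differentiable and satisfy the n-th mode system a' = nωb − Ka + p, b' = −nωa − Kb + q. Then at any time t at which the point (a(t), b(t)) lies strictly outside the evolving circle, i.e. (a(t) − p(t)/(2K))² + (b(t) − q(t)/(2K))² > (p(t)/(2K))² + (q(t)/(2K))², the quantity a(t)² + b(t)² is strictly decreasing (its derivative is negative), and at any time t at which (a(t), b(t)) lies strictly inside the evolving circle, a(t)² + b(t)² is strictly increasing (its derivative is positive). -/

import Mathlib

open Real

/-- For the `n`-th mode system, `a² + b²` is strictly decreasing at times when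
`(a, b)` lies strictly outside the evolving circle, and strictly increasing at
times when it lies strictly inside. -/
theorem water_wheel_mode_evolving_circle_monotonicity
    (K : ℝ) (hK : 0 < K) (n : ℕ)
    (ω p q a b : ℝ → ℝ)
    (hω : Continuous ω) (hp : Continuous p) (hq : Continuous q)
    (ha : Differentiable ℝ a) (hb : Differentiable ℝ b)
    (hade : ∀ t, deriv a t = (n : ℝ) * ω t * b t - K * a t + p t)
    (hbde : ∀ t, deriv b t = -((n : ℝ) * ω t) * a t - K * b t + q t) :
    ∀ t,
      ((a t - p t / (2 * K)) ^ 2 + (b t - q t / (2 * K)) ^ 2 >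
          (p t / (2 * K)) ^ 2 + (q t / (2 * K)) ^ 2 →
        deriv (fun s => a s ^ 2 + b s ^ 2) t < 0) ∧
      ((a t - p t / (2 * K)) ^ 2 + (b t - q t / (2 * K)) ^ 2 <
          (p t / (2 * K)) ^ 2 + (q t / (2 * K)) ^ 2 →
        0 < deriv (fun s => a s ^ 2 + b s ^ 2) t) := by
  intro t
  have hda : HasDerivAt a (deriv a t) t := (ha t).hasDerivAt
  have hdb : HasDerivAt b (deriv b t) t := (hb t).hasDerivAt
  have h : HasDerivAt (fun s => a s ^ 2 + b s ^ 2)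
      (2 * a t * deriv a t + 2 * b t * deriv b t) t := by
    have := ((hda.fun_pow 2).fun_add (hdb.fun_pow 2))
    simpa [mul_comm, mul_assoc, mul_left_comm] using this
  have hd : deriv (fun s => a s ^ 2 + b s ^ 2) t
      = 2 * a t * deriv a t + 2 * b t * deriv b t := h.deriv
  rw [hd, hade t, hbde t]
  have hK' : (2 * K) ≠ 0 := by positivity
  constructor <;> intro hcirc <;>
  · have hcirc' := mul_lt_mul_of_pos_left hcirc (by positivity : (0:ℝ) < (2*K)^2)
    rw [div_pow, div_pow] at hcirc'
    rw [sub_div' hK', sub_div' hK', div_pow, div_pow] at hcirc'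
    rw [mul_add, mul_add, mul_div_cancel₀ _ (by positivity : ((2*K)^2:ℝ) ≠ 0),
      mul_div_cancel₀ _ (by positivity : ((2*K)^2:ℝ) ≠ 0),
      mul_div_cancel₀ _ (by positivity : ((2*K)^2:ℝ) ≠ 0),
      mul_div_cancel₀ _ (by positivity : ((2*K)^2:ℝ) ≠ 0)] at hcirc'
    nlinarith [hcirc', hK, sq_nonneg (a t), sq_nonneg (b t)]
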